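/- Let $T>0$, $c=0$, $b>0$, $-1<\mu<1$, $w(x)=(1-x^2)^\mu$. Suppose $(\eta_1,u_1)$ and $(\eta_2,u_2)$ are two solutions in $C([0,T];H^2_w)\times C([0,T];H^2_w)$ of the integral system $\eta(t)=H(t)+\int_0^t A_D(u+\eta u)\,d\tau$, $u(t)=U(t)+\int_0^t A_D(\eta+u^2/2)\,d\tau$ with the same data $H,U$. Then $(\eta_1,u_1)=(\eta_2,u_2)$ on $[0,T]$. -/

import Mathlib

open MeasureTheory Set
open Filter

/-- The Jacobi weight `w(x) = (1-x^2)^μ`. -/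
noncomputable def jw (μ : ℝ) (x : ℝ) : ℝ := (1 - x^2) ^ μ

/-- Membership in the weighted Sobolev space `H^1_w(-1,1)`. -/
def MemH1w (μ : ℝ) (f : ℝ → ℝ) : Prop :=
  DifferentiableOn ℝ f (Ioo (-1) 1) ∧
  IntegrableOn (fun x => ((f x)^2 + (deriv f x)^2) * jw μ x) (Ioo (-1) 1)

/-- The `H^1_w` norm. -/
noncomputable def H1wNorm (μ : ℝ) (f : ℝ → ℝ) : ℝ :=
  Real.sqrt (∫ x in Ioo (-1:ℝ) 1, ((f x)^2 + (deriv f x)^2) * jw μ x)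

/-- Membership in the weighted space `L^2_w(-1,1)`. -/
def MemL2w (μ : ℝ) (f : ℝ → ℝ) : Prop :=
  IntegrableOn (fun x => (f x)^2 * jw μ x) (Ioo (-1) 1)

/-- The `L^2_w` norm. -/
noncomputable def L2wNorm (μ : ℝ) (f : ℝ → ℝ) : ℝ :=
  Real.sqrt (∫ x in Ioo (-1:ℝ) 1, (f x)^2 * jw μ x)

/-- Membership in the weighted Sobolev space `H^2_w(-1,1)`. -/
def MemH2w (μ : ℝ) (f : ℝ → ℝ) : Prop :=
  DifferentiableOn ℝ f (Ioo (-1) 1) ∧ DifferentiableOn ℝ (deriv f) (Ioo (-1) 1) ∧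
  IntegrableOn
    (fun x => ((f x)^2 + (deriv f x)^2 + (deriv (deriv f) x)^2) * jw μ x) (Ioo (-1) 1)

/-- The `H^2_w` norm. -/
noncomputable def H2wNorm (μ : ℝ) (f : ℝ → ℝ) : ℝ :=
  Real.sqrt (∫ x in Ioo (-1:ℝ) 1,
    ((f x)^2 + (deriv f x)^2 + (deriv (deriv f) x)^2) * jw μ x)

/-- `H^1_{w,0}`: functions of `H^1_w` vanishing at `±1`. -/
def MemH1w0 (μ : ℝ) (f : ℝ → ℝ) : Prop :=
  MemH1w μ f ∧ f (-1) = 0 ∧ f 1 = 0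

/-- The bilinear form `A_b(φ,ψ) = (φ,ψ)_w + b ∫ φ' (ψ w)'`. -/
noncomputable def bilinA (μ b : ℝ) (φ ψ : ℝ → ℝ) : ℝ :=
  (∫ x in Ioo (-1:ℝ) 1, φ x * ψ x * jw μ x) +
  b * ∫ x in Ioo (-1:ℝ) 1, deriv φ x * deriv (fun y => ψ y * jw μ y) x

/-- `w₁(x) = sinh((1+x)/√b)`. -/
noncomputable def wone (b x : ℝ) : ℝ := Real.sinh ((1 + x) / Real.sqrt b)

/-- `w₂(x) = sinh((1-x)/√b)`. -/
noncomputable def wtwo (b x : ℝ) : ℝ := Real.sinh ((1 - x) / Real.sqrt b)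

/-- The (constant) Wronskian `W = w₁ w₂' - w₁' w₂`, evaluated at `0`. -/
noncomputable def Wron (b : ℝ) : ℝ :=
  wone b 0 * deriv (wtwo b) 0 - deriv (wone b) 0 * wtwo b 0

/-- The `ξ`-derivative `G_ξ(x,ξ)` of the Green's function
`G(x,ξ) = -(1/(bW)) w₁(min(x,ξ)) w₂(max(x,ξ))`, taken piecewise away from `ξ = x`. -/
noncomputable def Gxi (b x ξ : ℝ) : ℝ :=
  if ξ ≤ x then -(1 / (b * Wron b)) * deriv (wone b) ξ * wtwo b x
  else -(1 / (b * Wron b)) * wone b x * deriv (wtwo b) ξ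

/-- The solution operator `A_D f (x) = ∫ G_ξ(x,ξ) f(ξ) dξ` of
`v - b v'' = -f'`, `v(±1) = 0`. -/
noncomputable def AD (b : ℝ) (f : ℝ → ℝ) (x : ℝ) : ℝ :=
  ∫ ξ in Set.Ioo (-1:ℝ) 1, Gxi b x ξ * f ξ

/-- `(η,u)` solves the integral system for the BBM-BBM case `c = 0`:
`η(t) = H(t) + ∫₀ᵗ A_D(u + ηu) dτ`, `u(t) = U(t) + ∫₀ᵗ A_D(η + u²/2) dτ`
on `[0,T]`, as a member of `C([0,T];H²_w) × C([0,T];H²_w)`. -/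
def IsSolBBM (T b μ : ℝ) (H U η u : ℝ → ℝ → ℝ) : Prop :=
  Continuous (fun p : ℝ × ℝ => η p.1 p.2) ∧
  Continuous (fun p : ℝ × ℝ => u p.1 p.2) ∧
  (∀ t ∈ Icc (0:ℝ) T, MemH2w μ (η t) ∧ MemH2w μ (u t)) ∧
  (∀ t ∈ Icc (0:ℝ) T, ∀ x : ℝ,
    η t x = H t x + (∫ τ in (0:ℝ)..t, AD b (fun y => u τ y + η τ y * u τ y) x) ∧
    u t x = U t x + (∫ τ in (0:ℝ)..t, AD b (fun y => η τ y + (u τ y)^2 / 2) x))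

lemma wone_hasDerivAt (b x : ℝ) :
    HasDerivAt (wone b) (Real.cosh ((1 + x) / Real.sqrt b) / Real.sqrt b) x := by
  have h1 : HasDerivAt (fun y : ℝ => (1 + y) / Real.sqrt b) (1 / Real.sqrt b) x :=
    ((hasDerivAt_id x).const_add 1).div_const _
  have := (Real.hasDerivAt_sinh ((1 + x) / Real.sqrt b)).comp x h1
  rw [show wone b = Real.sinh ∘ fun y => (1 + y) / Real.sqrt b from rfl]
  simpa [wone, div_eq_mul_inv, mul_comm] using this

lemma wtwo_hasDerivAt (b x : ℝ) :
    HasDerivAt (wtwo b) (-(Real.cosh ((1 - x) / Real.sqrt b) / Real.sqrt b)) x := by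
  have h1 : HasDerivAt (fun y : ℝ => (1 - y) / Real.sqrt b) (-(1 / Real.sqrt b)) x := by
    have : HasDerivAt (fun y : ℝ => (1 - y)) (-1) x := (hasDerivAt_id x).const_sub 1
    simpa [neg_div] using this.div_const (Real.sqrt b)
  have := (Real.hasDerivAt_sinh ((1 - x) / Real.sqrt b)).comp x h1
  rw [show wtwo b = Real.sinh ∘ fun y => (1 - y) / Real.sqrt b from rfl]
  simpa [wtwo, div_eq_mul_inv, mul_comm] using this

lemma deriv_wone (b : ℝ) : deriv (wone b) = fun x => Real.cosh ((1 + x) / Real.sqrt b) / Real.sqrt b :=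
  funext fun x => (wone_hasDerivAt b x).deriv

lemma deriv_wtwo (b : ℝ) : deriv (wtwo b) = fun x => -(Real.cosh ((1 - x) / Real.sqrt b) / Real.sqrt b) :=
  funext fun x => (wtwo_hasDerivAt b x).deriv

lemma Wron_neg {b : ℝ} (hb : 0 < b) : Wron b < 0 := by
  have hs : 0 < Real.sqrt b := Real.sqrt_pos.2 hb
  have h1 : 0 < Real.sinh ((Real.sqrt b)⁻¹) := by
    rw [← Real.sinh_zero]; exact Real.sinh_lt_sinh.2 (by positivity)
  have h2 : 0 < Real.cosh ((Real.sqrt b)⁻¹) := Real.cosh_pos _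
  have h3 : 0 < Real.cosh ((Real.sqrt b)⁻¹) / Real.sqrt b := by positivity
  simp only [Wron, deriv_wone, deriv_wtwo, wone, wtwo]
  norm_num
  nlinarith

/-- Constant bounding the kernel. -/
noncomputable def GC (b : ℝ) : ℝ :=
  Real.cosh (2 / Real.sqrt b) / Real.sqrt b * Real.sinh (2 / Real.sqrt b) / (b * |Wron b|)

lemma GC_nonneg {b : ℝ} (hb : 0 < b) : 0 ≤ GC b := by
  have hs : 0 < Real.sqrt b := Real.sqrt_pos.2 hb
  have h1 : (0:ℝ) ≤ Real.sinh (2 / Real.sqrt b) := by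
    rw [← Real.sinh_zero]; exact Real.sinh_le_sinh.2 (by positivity)
  have h2 : 0 < Real.cosh (2 / Real.sqrt b) := Real.cosh_pos _
  have h3 : (0:ℝ) ≤ |Wron b| := abs_nonneg _
  apply div_nonneg (mul_nonneg (div_nonneg (Real.cosh_pos _).le hs.le) h1)
    (mul_nonneg hb.le h3)

lemma Gxi_bound {b : ℝ} (hb : 0 < b) {x ξ : ℝ} (hx : x ∈ Icc (-1:ℝ) 1)
    (hξ : ξ ∈ Icc (-1:ℝ) 1) : |Gxi b x ξ| ≤ GC b := by
  have hs : 0 < Real.sqrt b := Real.sqrt_pos.2 hb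
  have hW : Wron b ≠ 0 := ne_of_lt (Wron_neg hb)
  have hc1 : |(-(1 / (b * Wron b)))| = 1 / (b * |Wron b|) := by
    rw [abs_neg, abs_div, abs_mul, abs_of_pos hb, abs_one]
  have hGC : GC b = 1 / (b * |Wron b|) * (Real.cosh (2 / Real.sqrt b) / Real.sqrt b)
      * Real.sinh (2 / Real.sqrt b) := by
    unfold GC; ring
  have hWpos : 0 < |Wron b| := abs_pos.2 hW
  have hbne : 0 < b * |Wron b| := by positivity
  have key : ∀ y ∈ Icc (-1:ℝ) 1,
      |Real.cosh ((1 + y) / Real.sqrt b) / Real.sqrt b| ≤ Real.cosh (2 / Real.sqrt b) / Real.sqrt b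
      ∧ |Real.cosh ((1 - y) / Real.sqrt b) / Real.sqrt b| ≤ Real.cosh (2 / Real.sqrt b) / Real.sqrt b
      ∧ |Real.sinh ((1 + y) / Real.sqrt b)| ≤ Real.sinh (2 / Real.sqrt b)
      ∧ |Real.sinh ((1 - y) / Real.sqrt b)| ≤ Real.sinh (2 / Real.sqrt b) := by
    intro y hy
    obtain ⟨hy1, hy2⟩ := hy
    have ha : (0:ℝ) ≤ (1 + y) / Real.sqrt b := div_nonneg (by linarith) hs.le
    have hb' : (0:ℝ) ≤ (1 - y) / Real.sqrt b := div_nonneg (by linarith) hs.le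
    have hle1 : (1 + y) / Real.sqrt b ≤ 2 / Real.sqrt b :=
      div_le_div_of_nonneg_right (by linarith) hs.le
    have hle2 : (1 - y) / Real.sqrt b ≤ 2 / Real.sqrt b :=
      div_le_div_of_nonneg_right (by linarith) hs.le
    have h2s : (0:ℝ) ≤ 2 / Real.sqrt b := by positivity
    refine ⟨?_, ?_, ?_, ?_⟩
    · rw [abs_div, abs_of_pos (Real.cosh_pos _), abs_of_pos hs]
      apply div_le_div_of_nonneg_right ?_ hs.le
      exact Real.cosh_le_cosh.2 (by rw [abs_of_nonneg ha, abs_of_nonneg h2s]; exact hle1)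
    · rw [abs_div, abs_of_pos (Real.cosh_pos _), abs_of_pos hs]
      apply div_le_div_of_nonneg_right ?_ hs.le
      exact Real.cosh_le_cosh.2 (by rw [abs_of_nonneg hb', abs_of_nonneg h2s]; exact hle2)
    · rw [abs_of_nonneg (by rw [← Real.sinh_zero]; exact Real.sinh_le_sinh.2 ha)]
      exact Real.sinh_le_sinh.2 hle1
    · rw [abs_of_nonneg (by rw [← Real.sinh_zero]; exact Real.sinh_le_sinh.2 hb')]
      exact Real.sinh_le_sinh.2 hle2
  unfold Gxi
  split_ifs with h
  · rw [abs_mul, abs_mul, hc1, hGC, deriv_wone]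
    simp only [wtwo]
    have hd : (0:ℝ) ≤ 1 / (b * |Wron b|) := by positivity
    exact mul_le_mul (mul_le_mul le_rfl (key ξ hξ).1 (abs_nonneg _) hd)
      (key x hx).2.2.2 (abs_nonneg _)
      (mul_nonneg hd (by positivity))
  · rw [abs_mul, abs_mul, hc1, deriv_wtwo]
    have : GC b = 1 / (b * |Wron b|) * Real.sinh (2 / Real.sqrt b)
        * (Real.cosh (2 / Real.sqrt b) / Real.sqrt b) := by unfold GC; ring
    rw [this]
    simp only [wone, abs_neg]
    have hd : (0:ℝ) ≤ 1 / (b * |Wron b|) := by positivity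
    exact mul_le_mul (mul_le_mul le_rfl (key x hx).2.2.1 (abs_nonneg _) hd)
      (key ξ hξ).2.1 (abs_nonneg _)
      (mul_nonneg hd (by positivity))

lemma Gxi_measurable (b x : ℝ) : Measurable (fun ξ => Gxi b x ξ) := by
  unfold Gxi
  apply Measurable.ite (measurableSet_le measurable_id measurable_const)
  · rw [deriv_wone]
    fun_prop
  · rw [deriv_wtwo]
    fun_prop

lemma volume_Ioo_toReal : (volume (Ioo (-1:ℝ) 1)).toReal = 2 := by
  rw [Real.volume_Ioo]
  rw [ENNReal.toReal_ofReal (by norm_num)]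
  norm_num

lemma AD_abs_le {b : ℝ} (hb : 0 < b) {f : ℝ → ℝ} {R : ℝ}
    (hR : ∀ ξ ∈ Ioo (-1:ℝ) 1, |f ξ| ≤ R) {x : ℝ} (hx : x ∈ Icc (-1:ℝ) 1) :
    |AD b f x| ≤ GC b * R * 2 := by
  have hR0 : 0 ≤ R := le_trans (abs_nonneg _) (hR 0 (by norm_num))
  have h := norm_setIntegral_le_of_norm_le_const_ae' (μ := volume)
    (s := Ioo (-1:ℝ) 1) (f := fun ξ => Gxi b x ξ * f ξ) (C := GC b * R)
    (by rw [Real.volume_Ioo]; exact ENNReal.ofReal_lt_top)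
    (Eventually.of_forall ?_)
  · rw [Real.norm_eq_abs] at h
    calc |AD b f x| ≤ GC b * R * (volume (Ioo (-1:ℝ) 1)).toReal := h
    _ = GC b * R * 2 := by rw [volume_Ioo_toReal]
  · intro ξ hξ
    rw [Real.norm_eq_abs, abs_mul]
    exact mul_le_mul (Gxi_bound hb hx (Ioo_subset_Icc_self hξ)) (hR ξ hξ)
      (abs_nonneg _) (GC_nonneg hb)

lemma Gxi_integrableOn {b : ℝ} (hb : 0 < b) {x : ℝ} (hx : x ∈ Icc (-1:ℝ) 1)
    {f : ℝ → ℝ} (hf : Continuous f) :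
    IntegrableOn (fun ξ => Gxi b x ξ * f ξ) (Ioo (-1:ℝ) 1) := by
  obtain ⟨Cf, hCf⟩ : ∃ C, ∀ y ∈ Icc (-1:ℝ) 1, |f y| ≤ C := by
    obtain ⟨z, _, hz⟩ := (isCompact_Icc : IsCompact (Icc (-1:ℝ) 1)).exists_isMaxOn
      ⟨0, by norm_num⟩ (continuous_abs.comp hf).continuousOn
    exact ⟨|f z|, fun y hy => hz hy⟩
  have hCf0 : 0 ≤ Cf := le_trans (abs_nonneg _) (hCf 0 (by norm_num))
  refine Integrable.mono' (integrable_const (GC b * Cf))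
    (((Gxi_measurable b x).mul hf.measurable).aestronglyMeasurable) ?_
  rw [ae_restrict_iff' measurableSet_Ioo]
  refine Eventually.of_forall fun ξ hξ => ?_
  rw [Real.norm_eq_abs, abs_mul]
  exact mul_le_mul (Gxi_bound hb hx (Ioo_subset_Icc_self hξ))
    (hCf ξ (Ioo_subset_Icc_self hξ)) (abs_nonneg _) (GC_nonneg hb)

lemma AD_sub {b : ℝ} (hb : 0 < b) {x : ℝ} (hx : x ∈ Icc (-1:ℝ) 1)
    {f g : ℝ → ℝ} (hf : Continuous f) (hg : Continuous g) :
    AD b f x - AD b g x = AD b (fun y => f y - g y) x := by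
  unfold AD
  rw [← integral_sub (Gxi_integrableOn hb hx hf) (Gxi_integrableOn hb hx hg)]
  congr 1; funext ξ; ring

lemma AD_cont {b : ℝ} (hb : 0 < b) {x : ℝ} (hx : x ∈ Icc (-1:ℝ) 1)
    {g : ℝ → ℝ → ℝ} (hg : Continuous fun p : ℝ × ℝ => g p.1 p.2) :
    Continuous (fun τ => AD b (g τ) x) := by
  rw [continuous_iff_continuousAt]
  intro τ₀
  obtain ⟨Cg, hCg⟩ : ∃ C, ∀ p ∈ Icc (τ₀ - 1) (τ₀ + 1) ×ˢ Icc (-1:ℝ) 1,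
      |g p.1 p.2| ≤ C := by
    obtain ⟨z, _, hz⟩ := ((isCompact_Icc.prod isCompact_Icc) :
        IsCompact (Icc (τ₀ - 1) (τ₀ + 1) ×ˢ Icc (-1:ℝ) 1)).exists_isMaxOn
      ⟨(τ₀, 0), by constructor <;> constructor <;> norm_num⟩
      (continuous_abs.comp hg).continuousOn
    exact ⟨_, fun p hp => hz hp⟩
  apply continuousAt_of_dominated (bound := fun _ => GC b * Cg)
  · exact Eventually.of_forall fun τ =>
      ((Gxi_measurable b x).mul (hg.comp (continuous_const.prodMk continuous_id)
        : Continuous fun y => g τ y).measurable).aestronglyMeasurable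
  · have hmem : Icc (τ₀ - 1) (τ₀ + 1) ∈ nhds τ₀ :=
      Icc_mem_nhds (by linarith) (by linarith)
    filter_upwards [hmem] with τ hτ
    rw [ae_restrict_iff' measurableSet_Ioo]
    refine Eventually.of_forall fun ξ hξ => ?_
    rw [Real.norm_eq_abs, abs_mul]
    have hCg0 : 0 ≤ Cg := le_trans (abs_nonneg _)
      (hCg (τ₀, 0) ⟨by constructor <;> norm_num, by norm_num⟩)
    exact mul_le_mul (Gxi_bound hb hx (Ioo_subset_Icc_self hξ))
      (hCg (τ, ξ) ⟨hτ, Ioo_subset_Icc_self hξ⟩) (abs_nonneg _) (GC_nonneg hb)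
  · haveI : IsFiniteMeasure (volume.restrict (Ioo (-1:ℝ) 1)) := by
      constructor
      rw [Measure.restrict_apply_univ, Real.volume_Ioo]
      exact ENNReal.ofReal_lt_top
    exact integrable_const _
  · refine Eventually.of_forall fun ξ => ?_
    exact (continuous_const.mul (hg.comp (continuous_id.prodMk continuous_const))).continuousAt

lemma AD_integral_bound {b : ℝ} (hb : 0 < b) {x t c : ℝ} (hx : x ∈ Icc (-1:ℝ) 1)
    (ht0 : 0 ≤ t) (hc0 : 0 ≤ c) {g : ℝ → ℝ → ℝ}
    (hgc : Continuous fun p : ℝ × ℝ => g p.1 p.2) {n : ℕ}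
    (hbound : ∀ τ ∈ Ioc (0:ℝ) t, ∀ ξ ∈ Ioo (-1:ℝ) 1, |g τ ξ| ≤ c * τ ^ n) :
    |∫ τ in (0:ℝ)..t, AD b (g τ) x| ≤ 2 * GC b * c * t ^ (n+1) / (n+1) := by
  have hφ : Continuous (fun τ : ℝ => 2 * GC b * c * τ ^ n) :=
    continuous_const.mul (continuous_pow n)
  have hae : ∀ᵐ τ ∂(volume.restrict (Set.uIoc (0:ℝ) t)),
      ‖AD b (g τ) x‖ ≤ 2 * GC b * c * τ ^ n := by
    rw [Set.uIoc_of_le ht0, ae_restrict_iff' measurableSet_Ioc]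
    refine Eventually.of_forall fun τ hτ => ?_
    have h1 : ∀ ξ ∈ Ioo (-1:ℝ) 1, |g τ ξ| ≤ c * τ ^ n := hbound τ hτ
    have h2 := AD_abs_le hb h1 hx
    rw [Real.norm_eq_abs]
    calc |AD b (g τ) x| ≤ GC b * (c * τ ^ n) * 2 := h2
    _ = 2 * GC b * c * τ ^ n := by ring
  have key := intervalIntegral.norm_integral_le_abs_of_norm_le hae
    (hφ.intervalIntegrable 0 t)
  rw [Real.norm_eq_abs] at key
  refine key.trans (le_of_eq ?_)
  rw [intervalIntegral.integral_const_mul, integral_pow]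
  rw [abs_of_nonneg]
  · rw [zero_pow (Nat.succ_ne_zero n)]
    push_cast
    ring
  · apply mul_nonneg (mul_nonneg (mul_nonneg (by norm_num) (GC_nonneg hb)) hc0)
    apply div_nonneg _ (by positivity)
    rw [zero_pow (Nat.succ_ne_zero n)]
    have : (0:ℝ) ≤ t ^ (n+1) := pow_nonneg ht0 _
    linarith


/-- uniqueness for the integral formulation when `c = 0`:
two solutions in `C([0,T];H²_w) × C([0,T];H²_w)` with the same data `H,U` coincide. -/
theorem uniqueness_integral_system_c_zero (T b μ : ℝ) (hT : 0 < T) (hb : 0 < b)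
    (hμ₁ : -1 < μ) (hμ₂ : μ < 1) (H U : ℝ → ℝ → ℝ)
    (η₁ u₁ η₂ u₂ : ℝ → ℝ → ℝ)
    (h1 : IsSolBBM T b μ H U η₁ u₁) (h2 : IsSolBBM T b μ H U η₂ u₂) :
    ∀ t ∈ Icc (0:ℝ) T, ∀ x ∈ Icc (-1:ℝ) 1, η₁ t x = η₂ t x ∧ u₁ t x = u₂ t x := by
  obtain ⟨hηc1, huc1, -, heq1⟩ := h1
  obtain ⟨hηc2, huc2, -, heq2⟩ := h2
  -- bound B on the four functions over the compact set
  obtain ⟨B, hB⟩ : ∃ B, ∀ t ∈ Icc (0:ℝ) T, ∀ x ∈ Icc (-1:ℝ) 1,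
      |η₁ t x| + |u₁ t x| + |η₂ t x| + |u₂ t x| ≤ B := by
    obtain ⟨z, -, hz⟩ := ((isCompact_Icc.prod isCompact_Icc) :
        IsCompact (Icc (0:ℝ) T ×ˢ Icc (-1:ℝ) 1)).exists_isMaxOn
      ⟨(0, 0), ⟨⟨le_rfl, hT.le⟩, by norm_num⟩⟩
      (((((hηc1.abs.add huc1.abs).add hηc2.abs).add huc2.abs)).continuousOn)
    exact ⟨_, fun t ht x hx => hz (Set.mk_mem_prod ht hx)⟩
  have hB0 : 0 ≤ B := le_trans (by positivity) (hB 0 ⟨le_rfl, hT.le⟩ 0 (by norm_num))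
  -- bound M on the differences
  obtain ⟨M, hM⟩ : ∃ M, ∀ t ∈ Icc (0:ℝ) T, ∀ x ∈ Icc (-1:ℝ) 1,
      |η₁ t x - η₂ t x| + |u₁ t x - u₂ t x| ≤ M := by
    obtain ⟨z, -, hz⟩ := ((isCompact_Icc.prod isCompact_Icc) :
        IsCompact (Icc (0:ℝ) T ×ˢ Icc (-1:ℝ) 1)).exists_isMaxOn
      ⟨(0, 0), ⟨⟨le_rfl, hT.le⟩, by norm_num⟩⟩
      ((((hηc1.sub hηc2).abs.add (huc1.sub huc2).abs)).continuousOn)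
    exact ⟨_, fun t ht x hx => hz (Set.mk_mem_prod ht hx)⟩
  have hM0 : 0 ≤ M := le_trans (by positivity) (hM 0 ⟨le_rfl, hT.le⟩ 0 (by norm_num))
  set K : ℝ := max 1 (4 * GC b * (1 + B)) with hKdef
  have hK1 : (1:ℝ) ≤ K := le_max_left _ _
  have hK0 : (0:ℝ) < K := lt_of_lt_of_le one_pos hK1
  have hK4 : 4 * GC b * (1 + B) ≤ K := le_max_right _ _
  -- continuity of the difference integrand families
  have hgη : Continuous (fun p : ℝ × ℝ =>
      (u₁ p.1 p.2 + η₁ p.1 p.2 * u₁ p.1 p.2) - (u₂ p.1 p.2 + η₂ p.1 p.2 * u₂ p.1 p.2)) :=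
    (huc1.add (hηc1.mul huc1)).sub (huc2.add (hηc2.mul huc2))
  have hgu : Continuous (fun p : ℝ × ℝ =>
      (η₁ p.1 p.2 + (u₁ p.1 p.2)^2 / 2) - (η₂ p.1 p.2 + (u₂ p.1 p.2)^2 / 2)) :=
    (hηc1.add ((huc1.pow 2).div_const 2)).sub (hηc2.add ((huc2.pow 2).div_const 2))
  -- the key induction
  have key : ∀ n : ℕ, ∀ t ∈ Icc (0:ℝ) T, ∀ x ∈ Icc (-1:ℝ) 1,
      |η₁ t x - η₂ t x| ≤ M * (K*t)^n / n.factorial ∧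
      |u₁ t x - u₂ t x| ≤ M * (K*t)^n / n.factorial := by
    intro n
    induction n with
    | zero =>
      intro t ht x hx
      have h := hM t ht x hx
      have h1 : (0:ℝ) ≤ |u₁ t x - u₂ t x| := abs_nonneg _
      have h2 : (0:ℝ) ≤ |η₁ t x - η₂ t x| := abs_nonneg _
      simp only [pow_zero, Nat.factorial_zero, Nat.cast_one, mul_one, div_one]
      constructor <;> linarith
    | succ n ih =>
      intro t ht x hx
      have ht0 : 0 ≤ t := ht.1
      have htT : t ≤ T := ht.2
      -- integral identities for the differences
      have hsl : ∀ τ : ℝ, Continuous (fun y => u₁ τ y + η₁ τ y * u₁ τ y) := fun τ =>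
        ((huc1.add (hηc1.mul huc1)).comp (continuous_const.prodMk continuous_id) :)
      have hsl2 : ∀ τ : ℝ, Continuous (fun y => u₂ τ y + η₂ τ y * u₂ τ y) := fun τ =>
        ((huc2.add (hηc2.mul huc2)).comp (continuous_const.prodMk continuous_id) :)
      have hsl3 : ∀ τ : ℝ, Continuous (fun y => η₁ τ y + (u₁ τ y)^2 / 2) := fun τ =>
        (((hηc1.add ((huc1.pow 2).div_const 2))).comp (continuous_const.prodMk continuous_id) :)
      have hsl4 : ∀ τ : ℝ, Continuous (fun y => η₂ τ y + (u₂ τ y)^2 / 2) := fun τ =>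
        (((hηc2.add ((huc2.pow 2).div_const 2))).comp (continuous_const.prodMk continuous_id) :)
      have hηd : η₁ t x - η₂ t x = ∫ τ in (0:ℝ)..t,
          AD b (fun y => (u₁ τ y + η₁ τ y * u₁ τ y) - (u₂ τ y + η₂ τ y * u₂ τ y)) x := by
        rw [(heq1 t ht x).1, (heq2 t ht x).1]
        have harr : ∀ a i1 i2 : ℝ, a + i1 - (a + i2) = i1 - i2 := fun a i1 i2 => by ring
        rw [harr, ← intervalIntegral.integral_sub
          ((AD_cont hb hx (huc1.add (hηc1.mul huc1))).intervalIntegrable 0 t)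
          ((AD_cont hb hx (huc2.add (hηc2.mul huc2))).intervalIntegrable 0 t)]
        congr 1
        funext τ
        exact AD_sub hb hx (hsl τ) (hsl2 τ)
      have hud : u₁ t x - u₂ t x = ∫ τ in (0:ℝ)..t,
          AD b (fun y => (η₁ τ y + (u₁ τ y)^2 / 2) - (η₂ τ y + (u₂ τ y)^2 / 2)) x := by
        rw [(heq1 t ht x).2, (heq2 t ht x).2]
        have harr : ∀ a i1 i2 : ℝ, a + i1 - (a + i2) = i1 - i2 := fun a i1 i2 => by ring
        rw [harr, ← intervalIntegral.integral_sub
          ((AD_cont hb hx (hηc1.add ((huc1.pow 2).div_const 2))).intervalIntegrable 0 t)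
          ((AD_cont hb hx (hηc2.add ((huc2.pow 2).div_const 2))).intervalIntegrable 0 t)]
        congr 1
        funext τ
        exact AD_sub hb hx (hsl3 τ) (hsl4 τ)
      -- the constant c for the step
      set c : ℝ := 2 * (1 + B) * (M * K^n / n.factorial) with hcdef
      have hc0 : 0 ≤ c := by positivity
      -- pointwise bounds on the difference integrands
      have hptη : ∀ τ ∈ Ioc (0:ℝ) t, ∀ ξ ∈ Ioo (-1:ℝ) 1,
          |(u₁ τ ξ + η₁ τ ξ * u₁ τ ξ) - (u₂ τ ξ + η₂ τ ξ * u₂ τ ξ)| ≤ c * τ ^ n := by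
        intro τ hτ ξ hξ
        have hτI : τ ∈ Icc (0:ℝ) T := ⟨hτ.1.le, hτ.2.trans htT⟩
        have hξI : ξ ∈ Icc (-1:ℝ) 1 := Ioo_subset_Icc_self hξ
        obtain ⟨ih1, ih2⟩ := ih τ hτI ξ hξI
        have hBs := hB τ hτI ξ hξI
        have hτ0 : 0 ≤ τ := hτ.1.le
        have hg0 : 0 ≤ M * (K*τ)^n / n.factorial := by positivity
        have e : (u₁ τ ξ + η₁ τ ξ * u₁ τ ξ) - (u₂ τ ξ + η₂ τ ξ * u₂ τ ξ)
            = (1 + η₁ τ ξ) * (u₁ τ ξ - u₂ τ ξ) + u₂ τ ξ * (η₁ τ ξ - η₂ τ ξ) := by ring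
        rw [e]
        have h1 : |η₁ τ ξ| ≤ B := by
          have := abs_nonneg (u₁ τ ξ); have := abs_nonneg (η₂ τ ξ); have := abs_nonneg (u₂ τ ξ)
          linarith
        have h2 : |u₂ τ ξ| ≤ B := by
          have := abs_nonneg (u₁ τ ξ); have := abs_nonneg (η₂ τ ξ); have := abs_nonneg (η₁ τ ξ)
          linarith
        calc |(1 + η₁ τ ξ) * (u₁ τ ξ - u₂ τ ξ) + u₂ τ ξ * (η₁ τ ξ - η₂ τ ξ)|
            ≤ |1 + η₁ τ ξ| * |u₁ τ ξ - u₂ τ ξ| + |u₂ τ ξ| * |η₁ τ ξ - η₂ τ ξ| := by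
              rw [← abs_mul, ← abs_mul]; exact abs_add_le _ _
        _ ≤ (1 + B) * (M * (K*τ)^n / n.factorial) + B * (M * (K*τ)^n / n.factorial) := by
              apply add_le_add
              · exact mul_le_mul ((abs_add_le 1 (η₁ τ ξ)).trans (by rw [abs_one]; linarith))
                  ih2 (abs_nonneg _) (by linarith)
              · exact mul_le_mul h2 ih1 (abs_nonneg _) hB0
        _ ≤ c * τ ^ n := by
              rw [hcdef, mul_pow]
              have : (1 + B) * (M * (K^n * τ^n) / n.factorial)
                  + B * (M * (K^n * τ^n) / n.factorial)
                  = (1 + 2*B) * (M * K^n / n.factorial) * τ^n := by ring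
              rw [this]
              have h3 : (0:ℝ) ≤ M * K^n / n.factorial * τ^n := by positivity
              nlinarith [mul_nonneg (mul_nonneg hM0 (pow_nonneg hK0.le n))
                (pow_nonneg hτ0 n)]
      have hptu : ∀ τ ∈ Ioc (0:ℝ) t, ∀ ξ ∈ Ioo (-1:ℝ) 1,
          |(η₁ τ ξ + (u₁ τ ξ)^2 / 2) - (η₂ τ ξ + (u₂ τ ξ)^2 / 2)| ≤ c * τ ^ n := by
        intro τ hτ ξ hξ
        have hτI : τ ∈ Icc (0:ℝ) T := ⟨hτ.1.le, hτ.2.trans htT⟩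
        have hξI : ξ ∈ Icc (-1:ℝ) 1 := Ioo_subset_Icc_self hξ
        obtain ⟨ih1, ih2⟩ := ih τ hτI ξ hξI
        have hBs := hB τ hτI ξ hξI
        have hτ0 : 0 ≤ τ := hτ.1.le
        have e : (η₁ τ ξ + (u₁ τ ξ)^2 / 2) - (η₂ τ ξ + (u₂ τ ξ)^2 / 2)
            = (η₁ τ ξ - η₂ τ ξ) + (u₁ τ ξ + u₂ τ ξ) / 2 * (u₁ τ ξ - u₂ τ ξ) := by ring
        rw [e]
        have h2 : |(u₁ τ ξ + u₂ τ ξ) / 2| ≤ B := by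
          have := abs_nonneg (η₁ τ ξ); have := abs_nonneg (η₂ τ ξ)
          have := abs_add_le (u₁ τ ξ) (u₂ τ ξ)
          rw [abs_div, abs_of_pos (by norm_num : (0:ℝ) < 2)]
          rw [div_le_iff₀ (by norm_num : (0:ℝ) < 2)]
          linarith
        calc |(η₁ τ ξ - η₂ τ ξ) + (u₁ τ ξ + u₂ τ ξ) / 2 * (u₁ τ ξ - u₂ τ ξ)|
            ≤ |η₁ τ ξ - η₂ τ ξ| + |(u₁ τ ξ + u₂ τ ξ) / 2| * |u₁ τ ξ - u₂ τ ξ| := by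
              rw [← abs_mul]; exact abs_add_le _ _
        _ ≤ (M * (K*τ)^n / n.factorial) + B * (M * (K*τ)^n / n.factorial) := by
              apply add_le_add ih1
              exact mul_le_mul h2 ih2 (abs_nonneg _) hB0
        _ ≤ c * τ ^ n := by
              rw [hcdef, mul_pow]
              have : (M * (K^n * τ^n) / n.factorial) + B * (M * (K^n * τ^n) / n.factorial)
                  = (1 + B) * (M * K^n / n.factorial) * τ^n := by ring
              rw [this]
              nlinarith [mul_nonneg (mul_nonneg (mul_nonneg hM0 (pow_nonneg hK0.le n))
                (inv_nonneg.2 (Nat.cast_nonneg n.factorial))) (pow_nonneg hτ0 n),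
                mul_nonneg (div_nonneg (mul_nonneg hM0 (pow_nonneg hK0.le n))
                  (Nat.cast_nonneg n.factorial)) (pow_nonneg hτ0 n)]
      -- final algebra: 2 GC c t^{n+1}/(n+1) ≤ M (Kt)^{n+1}/(n+1)!
      have hfinal : 2 * GC b * c * t ^ (n+1) / (n+1)
          ≤ M * (K*t)^(n+1) / (n+1).factorial := by
        rw [hcdef, Nat.factorial_succ, mul_pow]
        have htn : (0:ℝ) ≤ t ^ (n+1) := pow_nonneg ht0 _
        have hfk : (0:ℝ) < n.factorial := by exact_mod_cast n.factorial_pos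
        have e1 : 2 * GC b * (2 * (1 + B) * (M * K^n / n.factorial)) * t ^ (n+1) / (n+1)
            = (4 * GC b * (1 + B)) * (M * K^n * t^(n+1) / ((n+1) * n.factorial)) := by
          push_cast
          field_simp
          ring
        have e2 : M * (K^(n+1) * t^(n+1)) / ((n+1).factorial : ℝ)
            = K * (M * K^n * t^(n+1) / ((n+1) * n.factorial)) := by
          rw [Nat.factorial_succ]
          push_cast
          rw [pow_succ]
          field_simp
        rw [e1]
        calc (4 * GC b * (1 + B)) * (M * K^n * t^(n+1) / ((n+1) * n.factorial))
            ≤ K * (M * K^n * t^(n+1) / ((n+1) * n.factorial)) := by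
              apply mul_le_mul_of_nonneg_right hK4
              positivity
        _ = M * (K^(n+1) * t^(n+1)) / ((n+1).factorial : ℝ) := e2.symm
        _ = M * (K^(n+1) * t^(n+1)) / (((n+1) : ℕ).factorial : ℝ) := by norm_num
      constructor
      · rw [hηd, mul_pow]
        rw [← mul_pow]
        exact le_trans (AD_integral_bound hb hx ht0 hc0 hgη hptη) hfinal
      · rw [hud, mul_pow]
        rw [← mul_pow]
        exact le_trans (AD_integral_bound hb hx ht0 hc0 hgu hptu) hfinal
  -- conclusion via n → ∞
  intro t ht x hx
  have hlim : Tendsto (fun n : ℕ => M * (K*t)^n / n.factorial) atTop (nhds 0) := by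
    have := (FloorSemiring.tendsto_pow_div_factorial_atTop (K*t)).const_mul M
    simpa [mul_div_assoc] using this
  have h1 : |η₁ t x - η₂ t x| ≤ 0 :=
    ge_of_tendsto hlim (Eventually.of_forall fun n => (key n t ht x hx).1)
  have h2 : |u₁ t x - u₂ t x| ≤ 0 :=
    ge_of_tendsto hlim (Eventually.of_forall fun n => (key n t ht x hx).2)
  constructor
  · have := abs_nonneg (η₁ t x - η₂ t x)
    have : |η₁ t x - η₂ t x| = 0 := le_antisymm h1 this
    linarith [abs_eq_zero.1 this, sub_eq_zero.1 (abs_eq_zero.1 this)]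
  · have := abs_nonneg (u₁ t x - u₂ t x)
    have : |u₁ t x - u₂ t x| = 0 := le_antisymm h2 this
    linarith [sub_eq_zero.1 (abs_eq_zero.1 this)]
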